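/- For any knot sequence, any degree m ≥ 1, any index i with −m ≤ i ≤ n−1, and every u ∈ ℝ that is not equal to any of the knots t_{−m}, …, t_{n+m}, the B-spline basis functions satisfy m·N_{m,i}(u) + (t_{m+i+1} − u)·N′_{m,i}(u) = m·(t_{m+i+1} − t_i)·N_{m−1,i}(u)/(t_{m+i} − t_i), where N′_{m,i} denotes the derivative of N_{m,i}, and where the right-hand side is taken to be 0 if t_{m+i} = t_i. -/

import Mathlib

/-- The B-spline basis functions `N_{p,i}` of degree `p` over the knot
sequence `t`, defined by the de Boor–Cox recursion, with the conventions that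
a fraction with vanishing denominator is replaced by `0` (automatic for real
division in Lean) and that `N_{p,q} ≡ 0` whenever `q < -p` or `q ≥ n`. -/
noncomputable def bspline (t : ℤ → ℝ) (n : ℕ) : ℕ → ℤ → ℝ → ℝ
  | 0 => fun i u =>
      if 0 ≤ i ∧ i < (n : ℤ) ∧ t i ≤ u ∧ u < t (i + 1) then 1 else 0
  | p + 1 => fun i u =>
      if -((p : ℤ) + 1) ≤ i ∧ i < (n : ℤ) then
        (u - t i) / (t ((p : ℤ) + 1 + i) - t i) * bspline t n p i u
          + (t ((p : ℤ) + 1 + i + 1) - u) / (t ((p : ℤ) + 1 + i + 1) - t (i + 1))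
              * bspline t n p (i + 1) u
      else 0
lemma bspline_eq_zero (t : ℤ → ℝ) (n : ℕ) (p : ℕ) (j : ℤ)
    (h : j < -(p:ℤ) ∨ (n:ℤ) ≤ j) : bspline t n p j = fun _ => 0 := by
  funext u
  cases p with
  | zero =>
    simp only [bspline]
    rw [if_neg]
    rintro ⟨h1, h2, _⟩
    simp only [Nat.cast_zero, neg_zero] at h
    omega
  | succ q =>
    simp only [bspline]
    rw [if_neg]
    rintro ⟨h1, h2⟩
    push_cast at h
    omega

noncomputable def Dsp (t : ℤ → ℝ) (n : ℕ) (p : ℕ) (j : ℤ) (u : ℝ) : ℝ :=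
  (p:ℝ)/(t ((p:ℤ)+j) - t j) * bspline t n (p-1) j u
    - (p:ℝ)/(t ((p:ℤ)+j+1) - t (j+1)) * bspline t n (p-1) (j+1) u

lemma Dsp_eq_zero (t : ℤ → ℝ) (n : ℕ) (p : ℕ) (j : ℤ)
    (h : j < -(p:ℤ) ∨ (n:ℤ) ≤ j) : Dsp t n p j u = 0 := by
  cases p with
  | zero => simp [Dsp]
  | succ q =>
    have h1 : bspline t n q j = fun _ => 0 := by
      apply bspline_eq_zero; push_cast at h ⊢; omega
    have h2 : bspline t n q (j+1) = fun _ => 0 := by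
      apply bspline_eq_zero; push_cast at h ⊢; omega
    simp [Dsp, h1, h2]

lemma bspline_deg0_hasDerivAt (t : ℤ → ℝ) (n : ℕ) (j : ℤ) (u : ℝ)
    (hj : u ≠ t j) (hj1 : u ≠ t (j+1)) :
    HasDerivAt (bspline t n 0 j) 0 u := by
  rcases lt_or_ge j 0 with h | h
  · rw [bspline_eq_zero t n 0 j (by left; push_cast; omega)]
    exact hasDerivAt_const u 0
  rcases le_or_gt (n:ℤ) j with h' | h'
  · rw [bspline_eq_zero t n 0 j (Or.inr h')]
    exact hasDerivAt_const u 0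
  by_cases hc : t j ≤ u ∧ u < t (j+1)
  · have h1 : t j < u := lt_of_le_of_ne hc.1 (Ne.symm hj)
    apply (hasDerivAt_const u (1:ℝ)).congr_of_eventuallyEq
    filter_upwards [Ioo_mem_nhds h1 hc.2] with v hv
    simp only [bspline]
    rw [if_pos ⟨h, h', hv.1.le, hv.2⟩]
  · by_cases h2 : u < t j
    · apply (hasDerivAt_const u (0:ℝ)).congr_of_eventuallyEq
      filter_upwards [Iio_mem_nhds h2] with v hv
      simp only [bspline]
      rw [if_neg]
      rintro ⟨_, _, hle, _⟩
      exact absurd hle (not_le.mpr hv)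
    · push_neg at h2
      have h3 : t (j+1) < u := by
        push_neg at hc
        exact lt_of_le_of_ne (hc h2) (Ne.symm hj1)
      apply (hasDerivAt_const u (0:ℝ)).congr_of_eventuallyEq
      filter_upwards [Ioi_mem_nhds h3] with v hv
      simp only [bspline]
      rw [if_neg]
      rintro ⟨_, _, _, hlt⟩
      exact absurd hlt (not_lt.mpr hv.le)

lemma quad (p u a b c d e f X Y Z : ℝ) (hab : a ≤ b) (hde : d ≤ e) (hbd : b ≤ d) :
    (u-a)/(d-a) * (p/(c-a)*X - p/(d-b)*Y) + (e-u)/(e-b) * (p/(d-b)*Y - p/(e-f)*Z)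
      = p/(d-a) * ((u-a)/(c-a)*X + (d-u)/(d-b)*Y)
        - p/(e-b) * ((u-b)/(d-b)*Y + (e-u)/(e-f)*Z) := by
  by_cases hd : d - b = 0
  · rw [hd]
    simp only [div_zero, zero_mul, mul_zero, sub_zero, zero_sub, add_zero, zero_add]
    ring
  · have h1 : 0 < d - b := lt_of_le_of_ne (by linarith) (Ne.symm hd)
    have hα : d - a ≠ 0 := by intro h; nlinarith
    have hβ : e - b ≠ 0 := by intro h; nlinarith
    have hkey : (e-b)/(e-b) = (d-a)/(d-a) := by rw [div_self hβ, div_self hα]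
    linear_combination (p/(d-b)*Y) * hkey

lemma Dsp_deg0 (t : ℤ → ℝ) (n : ℕ) (j : ℤ) (u : ℝ) : Dsp t n 0 j u = 0 := by
  simp [Dsp]

lemma bspline_hasDerivAt (m n : ℕ) (hn : 1 ≤ n) (t : ℤ → ℝ)
    (hmono : ∀ k l : ℤ, -(m:ℤ) ≤ k → k ≤ l → l ≤ (n:ℤ)+m → t k ≤ t l)
    (u : ℝ) (hu : ∀ k : ℤ, -(m:ℤ) ≤ k → k ≤ (n:ℤ)+m → u ≠ t k) :
    ∀ p : ℕ, p ≤ m → ∀ j : ℤ, HasDerivAt (bspline t n p j) (Dsp t n p j u) u := by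
  intro p
  induction p with
  | zero =>
    intro _ j
    rw [Dsp_deg0]
    rcases lt_or_ge j 0 with h | h
    · rw [bspline_eq_zero t n 0 j (by left; push_cast; omega)]
      exact hasDerivAt_const u 0
    rcases le_or_gt (n:ℤ) j with h' | h'
    · rw [bspline_eq_zero t n 0 j (Or.inr h')]
      exact hasDerivAt_const u 0
    exact bspline_deg0_hasDerivAt t n j u
      (hu j (by omega) (by omega)) (hu (j+1) (by omega) (by omega))
  | succ p ih =>
    intro hp j
    by_cases hg : -((p:ℤ)+1) ≤ j ∧ j < (n:ℤ)
    · have hfun : bspline t n (p+1) j = fun v =>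
          (v - t j)/(t ((p:ℤ)+1+j) - t j) * bspline t n p j v
            + (t ((p:ℤ)+1+j+1) - v)/(t ((p:ℤ)+1+j+1) - t (j+1)) * bspline t n p (j+1) v := by
        funext v; simp only [bspline]; rw [if_pos hg]
      rw [hfun]
      have hd := ((((hasDerivAt_id u).sub_const (t j)).div_const
            (t ((p:ℤ)+1+j) - t j)).mul (ih (Nat.le_of_succ_le hp) j)).add
          ((((hasDerivAt_const u (t ((p:ℤ)+1+j+1))).sub (hasDerivAt_id u)).div_const
            (t ((p:ℤ)+1+j+1) - t (j+1))).mul (ih (Nat.le_of_succ_le hp) (j+1)))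
      refine hd.congr_deriv (Eq.symm ?_)
      clear hd hfun
      simp only [Dsp, id_eq, Pi.sub_apply]
      push_cast
      rcases Nat.eq_zero_or_pos p with rfl | hp0
      · norm_num
        ring
      · obtain ⟨q, rfl⟩ := Nat.exists_eq_succ_of_ne_zero hp0.ne'
        simp only [Nat.succ_eq_add_one, Nat.add_sub_cancel]
        push_cast
        -- normalize knot indices
        have E1 : t ((q:ℤ)+1+1+j) = t ((q:ℤ)+j+2) := by congr 1; ring
        have E2 : t ((q:ℤ)+1+1+j+1) = t ((q:ℤ)+j+3) := by congr 1; ring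
        have E3 : t ((q:ℤ)+1+j) = t ((q:ℤ)+j+1) := by congr 1; ring
        have E4 : t ((q:ℤ)+1+j+1) = t ((q:ℤ)+j+2) := by congr 1; ring
        have E5 : t ((q:ℤ)+1+(j+1)) = t ((q:ℤ)+j+2) := by congr 1; ring
        have E6 : t ((q:ℤ)+1+(j+1)+1) = t ((q:ℤ)+j+3) := by congr 1; ring
        have E7 : t (j+1+1) = t (j+2) := by congr 1; ring
        have E8 : (j:ℤ)+1+1 = j+2 := by ring
        simp only [E1, E2, E3, E4, E5, E6, E7, E8]
        have hN : bspline t n (q+1) j u = if -((q:ℤ)+1) ≤ j ∧ j < (n:ℤ) then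
            (u - t j)/(t ((q:ℤ)+j+1) - t j) * bspline t n q j u
              + (t ((q:ℤ)+j+2) - u)/(t ((q:ℤ)+j+2) - t (j+1)) * bspline t n q (j+1) u
          else 0 := by
          simp only [bspline, E3, E4]
        have hM : bspline t n (q+1) (j+1) u = if -((q:ℤ)+1) ≤ j+1 ∧ j+1 < (n:ℤ) then
            (u - t (j+1))/(t ((q:ℤ)+j+2) - t (j+1)) * bspline t n q (j+1) u
              + (t ((q:ℤ)+j+3) - u)/(t ((q:ℤ)+j+3) - t (j+2)) * bspline t n q (j+2) u
          else 0 := by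
          simp only [bspline, E5, E6, E7, E8]
        push_cast at hg
        obtain ⟨hg1, hg2⟩ := hg
        by_cases hA : -((q:ℤ)+1) ≤ j
        · by_cases hB : j+1 < (n:ℤ)
          · rw [if_pos ⟨hA, by omega⟩] at hN
            rw [if_pos ⟨by omega, hB⟩] at hM
            rw [hN, hM]
            have hab : t j ≤ t (j+1) := hmono _ _ (by omega) (by omega) (by omega)
            have hde : t ((q:ℤ)+j+2) ≤ t ((q:ℤ)+j+3) :=
              hmono _ _ (by omega) (by omega) (by omega)
            have hbd : t (j+1) ≤ t ((q:ℤ)+j+2) :=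
              hmono _ _ (by omega) (by omega) (by omega)
            have hq := quad ((q:ℝ)+1) u (t j) (t (j+1)) (t ((q:ℤ)+j+1))
              (t ((q:ℤ)+j+2)) (t ((q:ℤ)+j+3)) (t (j+2)) (bspline t n q j u)
              (bspline t n q (j+1) u) (bspline t n q (j+2) u) hab hde hbd
            linear_combination -hq
          · rw [if_pos ⟨hA, hg2⟩] at hN
            rw [if_neg (fun h => absurd h.2 (by omega))] at hM
            have Y0 : bspline t n q (j+1) u = 0 := by
              rw [bspline_eq_zero t n q (j+1) (Or.inr (by omega))]
            have Z0 : bspline t n q (j+2) u = 0 := by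
              rw [bspline_eq_zero t n q (j+2) (Or.inr (by omega))]
            rw [hN, hM, Y0, Z0]; ring
        · rw [if_neg (fun h => absurd h.1 hA)] at hN
          rw [if_pos ⟨by omega, by omega⟩] at hM
          have X0 : bspline t n q j u = 0 := by
            rw [bspline_eq_zero t n q j (Or.inl (by omega))]
          have Y0 : bspline t n q (j+1) u = 0 := by
            rw [bspline_eq_zero t n q (j+1) (Or.inl (by omega))]
          rw [hN, hM, X0, Y0]; ring
    · have h' : j < -((p:ℤ)+1) ∨ (n:ℤ) ≤ j := by omega
      have hz : bspline t n (p+1) j = fun _ => 0 :=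
        bspline_eq_zero t n (p+1) j (by push_cast; tauto)
      rw [hz, Dsp_eq_zero t n (p+1) j (by push_cast; tauto)]
      exact hasDerivAt_const u 0


/-- The `k`-th Bernstein basis polynomial of degree `p`. -/
noncomputable def bern (p k : ℕ) (x : ℝ) : ℝ :=
  (p.choose k : ℝ) * x ^ k * (1 - x) ^ (p - k)

/-- `m·N_{m,i}(u) + (t_{m+i+1} − u)·N′_{m,i}(u)
      = m·(t_{m+i+1} − t_i)·N_{m−1,i}(u)/(t_{m+i} − t_i)`
for every `u` which is not a knot (the right-hand side being `0` when
`t_{m+i} = t_i`, which is automatic for real division). -/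
theorem bspline_diff_rec_left
    (m n : ℕ) (hm : 1 ≤ m) (hn : 1 ≤ n) (t : ℤ → ℝ)
    (hmono : ∀ k l : ℤ, -(m : ℤ) ≤ k → k ≤ l → l ≤ (n : ℤ) + m → t k ≤ t l)
    (h0n : t 0 < t n)
    (i : ℤ) (hi1 : -(m : ℤ) ≤ i) (hi2 : i ≤ (n : ℤ) - 1)
    (u : ℝ) (hu : ∀ k : ℤ, -(m : ℤ) ≤ k → k ≤ (n : ℤ) + m → u ≠ t k) :
    (m : ℝ) * bspline t n m i u
        + (t ((m : ℤ) + i + 1) - u) * deriv (bspline t n m i) u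
      = (m : ℝ) * (t ((m : ℤ) + i + 1) - t i)
          * (bspline t n (m - 1) i u / (t ((m : ℤ) + i) - t i)) := by
  obtain ⟨q, rfl⟩ : ∃ q, m = q + 1 := ⟨m - 1, by omega⟩
  have hder := (bspline_hasDerivAt (q+1) n hn t hmono u hu (q+1) le_rfl i).deriv
  rw [hder]
  simp only [Dsp, Nat.add_sub_cancel]
  push_cast
  push_cast at hi1 hi2
  have E3 : t ((q:ℤ)+1+i) = t ((q:ℤ)+i+1) := by congr 1; ring
  have E4 : t ((q:ℤ)+1+i+1) = t ((q:ℤ)+i+2) := by congr 1; ring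
  simp only [E3, E4]
  have hN : bspline t n (q+1) i u =
      (u - t i)/(t ((q:ℤ)+i+1) - t i) * bspline t n q i u
        + (t ((q:ℤ)+i+2) - u)/(t ((q:ℤ)+i+2) - t (i+1)) * bspline t n q (i+1) u := by
    simp only [bspline, E3, E4]
    rw [if_pos ⟨by omega, by omega⟩]
  rw [hN]
  ring
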